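/- Let Θ be a tree system of cut pairs over tree T with compatible shrinking metrics (with respect to a base vertex v₀), and let (M_T, d) be the total space with the quotient metric. Then every associated sequence for an end x ∈ ∂T is Cauchy in (M_T, d), and any two associated sequences (p_n), (p'_n) for the same end x satisfy d(p_n, p'_n) → 0. -/

import Mathlib

section TreeSystem

open scoped Classical

variable {U : Type*} (M : U → Type*)

noncomputable def fiberDistM (m : ∀ u, MetricSpace (M u)) (a b : Σ u, M u) : ℝ :=
  letI := m b.1
  if h : a.1 = b.1 then dist (h ▸ a.2) b.2 else 0

noncomputable def chainLengthM (m : ∀ u, MetricSpace (M u))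
    (c : List ((Σ u, M u) × (Σ u, M u))) : ℝ :=
  (c.map fun pr => fiberDistM M m pr.1 pr.2).sum

def IsLinkingChainM (R : (Σ u, M u) → (Σ u, M u) → Prop)
    (c : List ((Σ u, M u) × (Σ u, M u))) (x y : Σ u, M u) : Prop :=
  ∃ hne : c ≠ [], (c.head hne).1 = x ∧ (c.getLast hne).2 = y ∧
    (∀ pr ∈ c, pr.1.1 = pr.2.1) ∧ c.Chain' (fun pr pr' => R pr.2 pr'.1)

noncomputable def quotDistM (m : ∀ u, MetricSpace (M u))
    (R : (Σ u, M u) → (Σ u, M u) → Prop) (x y : Σ u, M u) : ℝ :=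
  sInf {L : ℝ | ∃ c, IsLinkingChainM M R c x y ∧ chainLengthM M m c = L}

def cutRel (G : SimpleGraph U) (Vset Wset : Set U)
    (ie : ∀ v w : U, M w → M v) (a b : Σ u, M u) : Prop :=
  ∃ (v w : U) (x : M w), v ∈ Vset ∧ w ∈ Wset ∧ G.Adj v w ∧
    a = ⟨w, x⟩ ∧ b = ⟨v, ie v w x⟩

/-- A ray `(v₁, w₁, v₂, w₂, …)` in the bipartite tree `G`, starting in `Vset` and alternating
between the two colors. -/
def IsAlternatingRay (G : SimpleGraph U) (Vset Wset : Set U) (r : ℕ → U) : Prop :=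
  (∀ n, G.Adj (r n) (r (n + 1))) ∧ Function.Injective r ∧
    (∀ n, r (2 * n) ∈ Vset) ∧ ∀ n, r (2 * n + 1) ∈ Wset

/-- Two rays represent the same end of the tree iff they eventually coincide. -/
def SameEnd (r r' : ℕ → U) : Prop :=
  ∃ k k' : ℕ, ∀ n, r (n + k) = r' (n + k')

/-- `p` is an associated sequence for (the end represented by) the ray `r`:
`p n` lies in the cut pair space `M_{w_n}`. -/
def IsAssociatedSeq (r : ℕ → U) (p : ℕ → Σ u, M u) : Prop :=
  ∀ n, (p n).1 = r (2 * n + 1)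

end TreeSystem

section Aux
open List

variable {U : Type*} {M : U → Type*} {m : ∀ u, MetricSpace (M u)}
variable {R : (Σ u, M u) → (Σ u, M u) → Prop}

lemma fiberDistM_nonneg (a b : Σ u, M u) : 0 ≤ fiberDistM M m a b := by
  unfold fiberDistM
  split
  · exact dist_nonneg
  · exact le_refl _

lemma fiberDistM_mk {u : U} (x y : M u) :
    fiberDistM M m (⟨u, x⟩ : Σ u, M u) ⟨u, y⟩ = @dist _ (m u).toDist x y := by
  simp [fiberDistM]

lemma chainLengthM_nonneg (c : List ((Σ u, M u) × (Σ u, M u))) :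
    0 ≤ chainLengthM M m c := by
  unfold chainLengthM
  apply List.sum_nonneg
  intro x hx
  obtain ⟨pr, _, rfl⟩ := List.mem_map.mp hx
  exact fiberDistM_nonneg _ _

lemma quotDistM_nonneg (x y : Σ u, M u) : 0 ≤ quotDistM M m R x y := by
  apply Real.sInf_nonneg
  rintro L ⟨c, _, rfl⟩
  exact chainLengthM_nonneg c

lemma quotDistM_le_chain {c : List ((Σ u, M u) × (Σ u, M u))} {x y : Σ u, M u}
    (h : IsLinkingChainM M R c x y) : quotDistM M m R x y ≤ chainLengthM M m c := by
  apply csInf_le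
  · exact ⟨0, by rintro L ⟨c', _, rfl⟩; exact chainLengthM_nonneg c'⟩
  · exact ⟨c, h, rfl⟩
lemma IsLinkingChainM.append {c₁ c₂ : List ((Σ u, M u) × (Σ u, M u))} {x z y : Σ u, M u}
    (hrefl : ∀ a, R a a)
    (h₁ : IsLinkingChainM M R c₁ x z) (h₂ : IsLinkingChainM M R c₂ z y) :
    IsLinkingChainM M R (c₁ ++ c₂) x y := by
  obtain ⟨hne₁, hh₁, hl₁, hf₁, hc₁⟩ := h₁
  obtain ⟨hne₂, hh₂, hl₂, hf₂, hc₂⟩ := h₂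
  refine ⟨by simp [hne₁], ?_, ?_, ?_, ?_⟩
  · rwa [List.head_append_of_ne_nil]
  · rwa [List.getLast_append_of_ne_nil _ hne₂]
  · intro pr hpr
    rcases List.mem_append.mp hpr with h | h
    · exact hf₁ pr h
    · exact hf₂ pr h
  · apply List.IsChain.append hc₁ hc₂
    intro a ha b hb
    rw [List.getLast?_eq_getLast hne₁] at ha
    rw [List.head?_eq_head hne₂] at hb
    obtain rfl : a = c₁.getLast hne₁ := by exact (Option.some_inj.mp ha).symm
    obtain rfl : b = c₂.head hne₂ := by exact (Option.some_inj.mp hb).symm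
    rw [hl₁, hh₂]
    exact hrefl z

lemma chainLengthM_append (c₁ c₂ : List ((Σ u, M u) × (Σ u, M u))) :
    chainLengthM M m (c₁ ++ c₂) = chainLengthM M m c₁ + chainLengthM M m c₂ := by
  simp [chainLengthM]

lemma quotDistM_triangle (hrefl : ∀ a, R a a) {x z y : Σ u, M u}
    (h₁ : ∃ c, IsLinkingChainM M R c x z) (h₂ : ∃ c, IsLinkingChainM M R c z y) :
    quotDistM M m R x y ≤ quotDistM M m R x z + quotDistM M m R z y := by
  refine le_of_forall_pos_le_add fun ε hε => ?_
  obtain ⟨c₁0, hc₁0⟩ := h₁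
  obtain ⟨c₂0, hc₂0⟩ := h₂
  obtain ⟨L₁, ⟨c₁, hc₁, rfl⟩, hl₁⟩ :=
    Real.lt_sInf_add_pos (s := {L : ℝ | ∃ c, IsLinkingChainM M R c x z ∧ chainLengthM M m c = L})
      ⟨_, c₁0, hc₁0, rfl⟩ (half_pos hε)
  obtain ⟨L₂, ⟨c₂, hc₂, rfl⟩, hl₂⟩ :=
    Real.lt_sInf_add_pos (s := {L : ℝ | ∃ c, IsLinkingChainM M R c z y ∧ chainLengthM M m c = L})
      ⟨_, c₂0, hc₂0, rfl⟩ (half_pos hε)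
  calc quotDistM M m R x y ≤ chainLengthM M m (c₁ ++ c₂) :=
        quotDistM_le_chain (hc₁.append hrefl hc₂)
    _ = chainLengthM M m c₁ + chainLengthM M m c₂ := chainLengthM_append _ _
    _ ≤ _ := by
        rw [quotDistM, quotDistM] at *
        linarith

lemma isLinkingChainM_single {x y : Σ u, M u} (h : x.1 = y.1) :
    IsLinkingChainM M R [(x, y)] x y := by
  refine ⟨by simp, by simp, by simp, ?_, List.isChain_singleton _⟩
  simpa using h

lemma quotDistM_le_dist {u : U} (x y : M u) :
    quotDistM M m R ⟨u, x⟩ ⟨u, y⟩ ≤ @dist _ (m u).toDist x y := by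
  have := quotDistM_le_chain (m := m) (R := R)
    (isLinkingChainM_single (R := R) (x := (⟨u, x⟩ : Σ u, M u)) (y := ⟨u, y⟩) rfl)
  simpa [chainLengthM, fiberDistM_mk] using this

lemma quotDistM_self (x : Σ u, M u) : quotDistM M m R x x = 0 := by
  refine le_antisymm ?_ (quotDistM_nonneg _ _)
  obtain ⟨u, a⟩ := x
  simpa using quotDistM_le_dist (m := m) (R := R) a a
lemma fiberDistM_symm (a b : Σ u, M u) : fiberDistM M m a b = fiberDistM M m b a := by
  obtain ⟨u, x⟩ := a; obtain ⟨v, y⟩ := b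
  by_cases h : u = v
  · subst h
    rw [fiberDistM_mk, fiberDistM_mk]
    letI := m u
    exact dist_comm x y
  · simp [fiberDistM, h, Ne.symm h]

lemma IsLinkingChainM.reverse {c : List ((Σ u, M u) × (Σ u, M u))} {x y : Σ u, M u}
    (hsymm : ∀ a b, R a b → R b a) (h : IsLinkingChainM M R c x y) :
    IsLinkingChainM M R ((c.map Prod.swap).reverse) y x := by
  obtain ⟨hne, hh, hl, hf, hc⟩ := h
  have hne' : (c.map Prod.swap).reverse ≠ [] := by simpa using hne
  refine ⟨hne', ?_, ?_, ?_, ?_⟩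
  · rw [List.head_reverse, List.getLast_map]
    · simpa using hl
  · rw [List.getLast_reverse, List.head_map]
    · simpa using hh
  · intro pr hpr
    simp only [List.mem_reverse, List.mem_map] at hpr
    obtain ⟨pr', hpr', rfl⟩ := hpr
    exact (hf pr' hpr').symm
  · show List.IsChain _ _
    rw [List.isChain_reverse, List.isChain_map]
    apply hc.imp
    intro a b hab
    exact hsymm _ _ hab

lemma chainLengthM_reverse_swap (c : List ((Σ u, M u) × (Σ u, M u))) :
    chainLengthM M m ((c.map Prod.swap).reverse) = chainLengthM M m c := by
  unfold chainLengthM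
  rw [List.map_reverse, List.sum_reverse, List.map_map]
  congr 1
  apply List.map_congr_left
  intro pr _
  exact fiberDistM_symm pr.2 pr.1

lemma quotDistM_symm (hsymm : ∀ a b, R a b → R b a) (x y : Σ u, M u) :
    quotDistM M m R x y = quotDistM M m R y x := by
  unfold quotDistM
  congr 1
  ext L
  constructor
  · rintro ⟨c, hc, rfl⟩
    exact ⟨_, hc.reverse hsymm, chainLengthM_reverse_swap c⟩
  · rintro ⟨c, hc, rfl⟩
    exact ⟨_, hc.reverse hsymm, chainLengthM_reverse_swap c⟩
lemma fiberDistM_self (a : Σ u, M u) : fiberDistM M m a a = 0 := by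
  obtain ⟨u, x⟩ := a
  rw [fiberDistM_mk]
  letI := m u
  exact dist_self x

variable {G : SimpleGraph U} {Vset Wset : Set U} {ie : ∀ v w : U, M w → M v}

lemma cut_linked (a : Σ u, M u) {v : U} (hv : v ∈ Vset) (hw : a.1 ∈ Wset)
    (hadj : G.Adj v a.1) :
    IsLinkingChainM M (Relation.EqvGen (cutRel M G Vset Wset ie))
      [(a, a), ((⟨v, ie v a.1 a.2⟩ : Σ u, M u), ⟨v, ie v a.1 a.2⟩)]
      a ⟨v, ie v a.1 a.2⟩ := by
  refine ⟨by simp, by simp, by simp, by simp, ?_⟩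
  refine List.isChain_cons_cons.mpr ⟨?_, List.isChain_singleton _⟩
  exact Relation.EqvGen.rel _ _ ⟨v, a.1, a.2, hv, hw, hadj, (Sigma.eta a).symm, rfl⟩

lemma quotDistM_cut (a : Σ u, M u) {v : U} (hv : v ∈ Vset) (hw : a.1 ∈ Wset)
    (hadj : G.Adj v a.1) :
    quotDistM M m (Relation.EqvGen (cutRel M G Vset Wset ie)) a ⟨v, ie v a.1 a.2⟩ = 0 := by
  refine le_antisymm ?_ (quotDistM_nonneg _ _)
  have := quotDistM_le_chain (m := m) (cut_linked (G := G) (ie := ie) a hv hw hadj)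
  simpa [chainLengthM, fiberDistM_self] using this

lemma quotDistM_cut' (a : Σ u, M u) {v : U} (hv : v ∈ Vset) (hw : a.1 ∈ Wset)
    (hadj : G.Adj v a.1) :
    quotDistM M m (Relation.EqvGen (cutRel M G Vset Wset ie)) ⟨v, ie v a.1 a.2⟩ a = 0 := by
  rw [quotDistM_symm (fun a b h => h.symm _ _)]
  exact quotDistM_cut a hv hw hadj
section Graph
variable {U : Type*} {G : SimpleGraph U} {Vset Wset : Set U}

lemma walk_parity (hdisj : Disjoint Vset Wset)
    (hbip : ∀ u v, G.Adj u v → (u ∈ Vset ∧ v ∈ Wset) ∨ (u ∈ Wset ∧ v ∈ Vset)) :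
    ∀ {a b : U} (p : G.Walk a b), ((a ∈ Vset) ↔ (b ∈ Vset)) ↔ Even p.length := by
  intro a b p
  induction p with
  | nil => simp
  | @cons a c b h q ih =>
    have hedge : (a ∈ Vset) ↔ ¬(c ∈ Vset) := by
      rcases hbip _ _ h with ⟨h1, h2⟩ | ⟨h1, h2⟩
      · exact ⟨fun _ => Set.disjoint_right.mp hdisj h2, fun _ => h1⟩
      · constructor
        · intro ha; exact absurd ha (Set.disjoint_right.mp hdisj h1)
        · intro hc; exact absurd h2 hc
    rw [SimpleGraph.Walk.length_cons, Nat.even_add_one, ← ih]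
    tauto

lemma dist_even (hconn : G.Connected) (hdisj : Disjoint Vset Wset)
    (hbip : ∀ u v, G.Adj u v → (u ∈ Vset ∧ v ∈ Wset) ∨ (u ∈ Wset ∧ v ∈ Vset))
    {a b : U} (ha : a ∈ Vset) (hb : b ∈ Vset) : Even (G.dist a b) := by
  obtain ⟨p, hp⟩ := hconn.exists_walk_length_eq_dist a b
  rw [← hp, ← walk_parity hdisj hbip p]
  exact iff_of_true ha hb

lemma ray_walk_exists {r : ℕ → U} (hadj : ∀ n, G.Adj (r n) (r (n + 1))) (n : ℕ) :
    ∃ p : G.Walk (r 0) (r n), p.length = n ∧ p.support = (List.range (n + 1)).map r := by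
  induction n with
  | zero => exact ⟨SimpleGraph.Walk.nil, rfl, by simp [List.range_succ]⟩
  | succ n ih =>
    obtain ⟨p, hlen, hsupp⟩ := ih
    refine ⟨p.concat (hadj n), ?_, ?_⟩
    · simp [SimpleGraph.Walk.length_concat, hlen]
    · rw [SimpleGraph.Walk.support_concat, hsupp, List.range_succ (n := n + 1)]
      simp

lemma ray_dist (hT : G.IsTree) {r : ℕ → U} (hadj : ∀ n, G.Adj (r n) (r (n + 1)))
    (hinj : Function.Injective r) (n : ℕ) : G.dist (r 0) (r n) = n := by
  classical
  obtain ⟨p, hlen, hsupp⟩ := ray_walk_exists hadj n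
  have hp : p.IsPath := by
    rw [SimpleGraph.Walk.isPath_def, hsupp]
    exact (List.nodup_range).map hinj
  have hle : G.dist (r 0) (r n) ≤ n := by
    have := SimpleGraph.dist_le p
    omega
  refine le_antisymm hle ?_
  obtain ⟨q, hq⟩ := hT.isConnected.exists_walk_length_eq_dist (r 0) (r n)
  have huniq : (⟨p, hp⟩ : G.Path (r 0) (r n)) = ⟨q.bypass, q.bypass_isPath⟩ :=
    hT.IsAcyclic.path_unique _ _
  have : p.length = q.bypass.length := congrArg (fun P : G.Path (r 0) (r n) => P.val.length) huniq
  have h2 := q.length_bypass_le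
  omega
end Graph
lemma pow_half_le {k i C : ℕ} (h : i + 1 ≤ k + C) :
    (1 / 2 : ℝ) ^ k ≤ 2 ^ C * (1 / 2 : ℝ) ^ (i + 1) := by
  have h1 : (1 / 2 : ℝ) ^ (k + C) ≤ (1 / 2 : ℝ) ^ (i + 1) :=
    pow_le_pow_of_le_one (by norm_num) (by norm_num) h
  have h3 : (0 : ℝ) < 2 ^ C := by positivity
  have key : (1 / 2 : ℝ) ^ k = (1 / 2 : ℝ) ^ (k + C) * 2 ^ C := by
    rw [pow_add, mul_assoc, ← mul_pow]
    norm_num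
  rw [key, mul_comm ((2:ℝ) ^ C)]
  exact mul_le_mul_of_nonneg_right h1 h3.le

lemma vert_bound {U : Type*} {G : SimpleGraph U} (hT : G.IsTree)
    {Vset Wset : Set U} (hdisj : Disjoint Vset Wset)
    (hbip : ∀ u v, G.Adj u v → (u ∈ Vset ∧ v ∈ Wset) ∨ (u ∈ Wset ∧ v ∈ Vset))
    {M : U → Type*} [∀ u, MetricSpace (M u)]
    {ie : ∀ v w : U, M w → M v} {v₀ : U} (hv₀ : v₀ ∈ Vset)
    (hshrink : ∀ v ∈ Vset, ∀ k : ℕ, G.dist v₀ v = 2 * k → ∀ x y : M v,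
      quotDistM M (fun _ => inferInstance) (Relation.EqvGen (cutRel M G Vset Wset ie))
        ⟨v, x⟩ ⟨v, y⟩ ≤ (1 / 2 : ℝ) ^ k)
    {r : ℕ → U} (hr : IsAlternatingRay G Vset Wset r) (i : ℕ)
    (x y : M (r (2 * i + 2))) :
    quotDistM M (fun _ => inferInstance) (Relation.EqvGen (cutRel M G Vset Wset ie))
      ⟨r (2 * i + 2), x⟩ ⟨r (2 * i + 2), y⟩
      ≤ 2 ^ (G.dist v₀ (r 0)) * (1 / 2 : ℝ) ^ (i + 1) := by
  obtain ⟨hadj, hinj, hV, hW⟩ := hr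
  have hv : r (2 * i + 2) ∈ Vset := by
    have := hV (i + 1); rwa [show 2 * (i + 1) = 2 * i + 2 by ring] at this
  obtain ⟨t, ht⟩ := dist_even hT.isConnected hdisj hbip hv₀ hv
  have hdist : G.dist v₀ (r (2 * i + 2)) = 2 * t := by omega
  have hb := hshrink _ hv t hdist x y
  have hray : G.dist (r 0) (r (2 * i + 2)) = 2 * i + 2 := ray_dist hT hadj hinj (2 * i + 2)
  have htri : G.dist (r 0) (r (2 * i + 2)) ≤
      G.dist (r 0) v₀ + G.dist v₀ (r (2 * i + 2)) := hT.isConnected.dist_triangle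
  have hC : G.dist (r 0) v₀ = G.dist v₀ (r 0) := SimpleGraph.dist_comm
  have hk : i + 1 ≤ t + G.dist v₀ (r 0) := by omega
  exact hb.trans (pow_half_le hk)
lemma step_bound {U : Type*} {G : SimpleGraph U} (hT : G.IsTree)
    {Vset Wset : Set U} (hdisj : Disjoint Vset Wset)
    (hbip : ∀ u v, G.Adj u v → (u ∈ Vset ∧ v ∈ Wset) ∨ (u ∈ Wset ∧ v ∈ Vset))
    {M : U → Type*} [∀ u, MetricSpace (M u)]
    {ie : ∀ v w : U, M w → M v} {v₀ : U} (hv₀ : v₀ ∈ Vset)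
    (hshrink : ∀ v ∈ Vset, ∀ k : ℕ, G.dist v₀ v = 2 * k → ∀ x y : M v,
      quotDistM M (fun _ => inferInstance) (Relation.EqvGen (cutRel M G Vset Wset ie))
        ⟨v, x⟩ ⟨v, y⟩ ≤ (1 / 2 : ℝ) ^ k)
    {r : ℕ → U} {p : ℕ → Σ u, M u} (hr : IsAlternatingRay G Vset Wset r)
    (hp : IsAssociatedSeq M r p) (i : ℕ) :
    quotDistM M (fun _ => inferInstance) (Relation.EqvGen (cutRel M G Vset Wset ie))
      (p i) (p (i + 1)) ≤ 2 ^ (G.dist v₀ (r 0)) * (1 / 2 : ℝ) ^ (i + 1) ∧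
    ∃ c, IsLinkingChainM M (Relation.EqvGen (cutRel M G Vset Wset ie)) c (p i) (p (i + 1)) := by
  set R := Relation.EqvGen (cutRel M G Vset Wset ie) with hR
  have hrefl : ∀ a : Σ u, M u, R a a := fun a => Relation.EqvGen.refl a
  have hsymm : ∀ a b : Σ u, M u, R a b → R b a := fun a b h => h.symm _ _
  obtain ⟨hadj, hinj, hV, hW⟩ := hr
  set a := p i with ha_def
  set b := p (i + 1) with hb_def
  have ha1 : a.1 = r (2 * i + 1) := hp i
  have hb1 : b.1 = r (2 * i + 3) := by
    have := hp (i + 1); rwa [show 2 * (i + 1) + 1 = 2 * i + 3 by ring] at this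
  have hv : r (2 * i + 2) ∈ Vset := by
    have := hV (i + 1); rwa [show 2 * (i + 1) = 2 * i + 2 by ring] at this
  have hwa : a.1 ∈ Wset := by rw [ha1]; exact hW i
  have hwb : b.1 ∈ Wset := by
    rw [hb1]
    have := hW (i + 1); rwa [show 2 * (i + 1) + 1 = 2 * i + 3 by ring] at this
  have hadja : G.Adj (r (2 * i + 2)) a.1 := by rw [ha1]; exact (hadj (2 * i + 1)).symm
  have hadjb : G.Adj (r (2 * i + 2)) b.1 := by rw [hb1]; exact hadj (2 * i + 2)
  set q1 : Σ u, M u := ⟨r (2 * i + 2), ie (r (2 * i + 2)) a.1 a.2⟩ with hq1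
  set q2 : Σ u, M u := ⟨r (2 * i + 2), ie (r (2 * i + 2)) b.1 b.2⟩ with hq2
  have h1 : quotDistM M (fun _ => inferInstance) R a q1 = 0 :=
    quotDistM_cut a hv hwa hadja
  have h2 : quotDistM M (fun _ => inferInstance) R q2 b = 0 :=
    quotDistM_cut' b hv hwb hadjb
  have h3 : quotDistM M (fun _ => inferInstance) R q1 q2 ≤
      2 ^ (G.dist v₀ (r 0)) * (1 / 2 : ℝ) ^ (i + 1) :=
    vert_bound hT hdisj hbip hv₀ hshrink ⟨hadj, hinj, hV, hW⟩ i _ _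
  have L1 : IsLinkingChainM M R _ a q1 := cut_linked a hv hwa hadja
  have L2 : IsLinkingChainM M R _ q1 q2 :=
    isLinkingChainM_single (R := R) (x := q1) (y := q2) rfl
  have L3 : IsLinkingChainM M R _ q2 b := (cut_linked b hv hwb hadjb).reverse hsymm
  have L23 : IsLinkingChainM M R _ q1 b := L2.append hrefl L3
  have L123 : IsLinkingChainM M R _ a b := L1.append hrefl L23
  refine ⟨?_, _, L123⟩
  have t1 := quotDistM_triangle (m := fun _ => inferInstance) hrefl ⟨_, L1⟩ ⟨_, L23⟩
  have t2 := quotDistM_triangle (m := fun _ => inferInstance) hrefl ⟨_, L2⟩ ⟨_, L3⟩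
  linarith [t1, t2, h1, h2, h3]

lemma cumul_bound {U : Type*} {G : SimpleGraph U} (hT : G.IsTree)
    {Vset Wset : Set U} (hdisj : Disjoint Vset Wset)
    (hbip : ∀ u v, G.Adj u v → (u ∈ Vset ∧ v ∈ Wset) ∨ (u ∈ Wset ∧ v ∈ Vset))
    {M : U → Type*} [∀ u, MetricSpace (M u)]
    {ie : ∀ v w : U, M w → M v} {v₀ : U} (hv₀ : v₀ ∈ Vset)
    (hshrink : ∀ v ∈ Vset, ∀ k : ℕ, G.dist v₀ v = 2 * k → ∀ x y : M v,
      quotDistM M (fun _ => inferInstance) (Relation.EqvGen (cutRel M G Vset Wset ie))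
        ⟨v, x⟩ ⟨v, y⟩ ≤ (1 / 2 : ℝ) ^ k)
    {r : ℕ → U} {p : ℕ → Σ u, M u} (hr : IsAlternatingRay G Vset Wset r)
    (hp : IsAssociatedSeq M r p) (m n : ℕ) (hmn : m ≤ n) :
    quotDistM M (fun _ => inferInstance) (Relation.EqvGen (cutRel M G Vset Wset ie))
      (p m) (p n) ≤ 2 ^ (G.dist v₀ (r 0)) * ((1 / 2 : ℝ) ^ m - (1 / 2 : ℝ) ^ n) ∧
    ∃ c, IsLinkingChainM M (Relation.EqvGen (cutRel M G Vset Wset ie)) c (p m) (p n) := by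
  set R := Relation.EqvGen (cutRel M G Vset Wset ie) with hR
  have hrefl : ∀ a : Σ u, M u, R a a := fun a => Relation.EqvGen.refl a
  induction n, hmn using Nat.le_induction with
  | base =>
    refine ⟨by simp [quotDistM_self], _, isLinkingChainM_single (R := R) rfl⟩
  | succ n hmn ih =>
    obtain ⟨ihb, c, ihc⟩ := ih
    obtain ⟨sb, c', sc⟩ := step_bound hT hdisj hbip hv₀ hshrink hr hp n
    refine ⟨?_, _, ihc.append hrefl sc⟩
    have tri := quotDistM_triangle (m := fun _ => inferInstance) hrefl ⟨_, ihc⟩ ⟨_, sc⟩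
    have : (2:ℝ) ^ (G.dist v₀ (r 0)) * ((1 / 2 : ℝ) ^ m - (1 / 2 : ℝ) ^ n)
        + 2 ^ (G.dist v₀ (r 0)) * (1 / 2 : ℝ) ^ (n + 1)
        = 2 ^ (G.dist v₀ (r 0)) * ((1 / 2 : ℝ) ^ m - (1 / 2 : ℝ) ^ (n + 1)) := by
      have : (1 / 2 : ℝ) ^ n = 2 * (1 / 2 : ℝ) ^ (n + 1) := by
        rw [pow_succ]; ring
      rw [this]; ring
    linarith
lemma ray_pos_mem {U : Type*} {G : SimpleGraph U} {Vset Wset : Set U}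
    {r : ℕ → U} (hr : IsAlternatingRay G Vset Wset r) (m : ℕ) :
    (m % 2 = 0 → r m ∈ Vset) ∧ (m % 2 = 1 → r m ∈ Wset) := by
  obtain ⟨_, _, hV, hW⟩ := hr
  constructor
  · intro h
    have : m = 2 * (m / 2) := by omega
    rw [this]; exact hV _
  · intro h
    have : m = 2 * (m / 2) + 1 := by omega
    rw [this]; exact hW _

lemma sameEnd_parity {U : Type*} {G : SimpleGraph U} {Vset Wset : Set U}
    (hdisj : Disjoint Vset Wset)
    {r r' : ℕ → U} (hr : IsAlternatingRay G Vset Wset r)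
    (hr' : IsAlternatingRay G Vset Wset r')
    {k k' : ℕ} (h : ∀ n, r (n + k) = r' (n + k')) : k % 2 = k' % 2 := by
  have hu : r k = r' k' := by simpa using h 0
  by_contra hne
  rcases Nat.mod_two_eq_zero_or_one k with hk | hk
  · have hk' : k' % 2 = 1 := by omega
    have h1 : r k ∈ Vset := (ray_pos_mem hr k).1 hk
    have h2 : r' k' ∈ Wset := (ray_pos_mem hr' k').2 hk'
    rw [hu] at h1
    exact Set.disjoint_left.mp hdisj h1 h2
  · have hk' : k' % 2 = 0 := by omega
    have h1 : r k ∈ Wset := (ray_pos_mem hr k).2 hk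
    have h2 : r' k' ∈ Vset := (ray_pos_mem hr' k').1 hk'
    rw [hu] at h1
    exact Set.disjoint_left.mp hdisj h2 h1

lemma bridge_bound {U : Type*} {G : SimpleGraph U} (hT : G.IsTree)
    {Vset Wset : Set U} (hdisj : Disjoint Vset Wset)
    (hbip : ∀ u v, G.Adj u v → (u ∈ Vset ∧ v ∈ Wset) ∨ (u ∈ Wset ∧ v ∈ Vset))
    {M : U → Type*} [∀ u, MetricSpace (M u)]
    {ie : ∀ v w : U, M w → M v} {v₀ : U} (hv₀ : v₀ ∈ Vset)
    (hshrink : ∀ v ∈ Vset, ∀ k : ℕ, G.dist v₀ v = 2 * k → ∀ x y : M v,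
      quotDistM M (fun _ => inferInstance) (Relation.EqvGen (cutRel M G Vset Wset ie))
        ⟨v, x⟩ ⟨v, y⟩ ≤ (1 / 2 : ℝ) ^ k)
    {r : ℕ → U} (hr : IsAlternatingRay G Vset Wset r) (j : ℕ)
    (a b : Σ u, M u) (ha1 : a.1 = r (2 * j + 1)) (hb1 : b.1 = r (2 * j + 1)) :
    quotDistM M (fun _ => inferInstance) (Relation.EqvGen (cutRel M G Vset Wset ie))
      a b ≤ 2 ^ (G.dist v₀ (r 0)) * (1 / 2 : ℝ) ^ (j + 1) ∧
    ∃ c, IsLinkingChainM M (Relation.EqvGen (cutRel M G Vset Wset ie)) c a b := by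
  set R := Relation.EqvGen (cutRel M G Vset Wset ie) with hR
  have hrefl : ∀ a : Σ u, M u, R a a := fun a => Relation.EqvGen.refl a
  have hsymm : ∀ a b : Σ u, M u, R a b → R b a := fun a b h => h.symm _ _
  obtain ⟨hadj, hinj, hV, hW⟩ := hr
  have hv : r (2 * j + 2) ∈ Vset := by
    have := hV (j + 1); rwa [show 2 * (j + 1) = 2 * j + 2 by ring] at this
  have hwa : a.1 ∈ Wset := by rw [ha1]; exact hW j
  have hwb : b.1 ∈ Wset := by rw [hb1]; exact hW j
  have hadja : G.Adj (r (2 * j + 2)) a.1 := by rw [ha1]; exact (hadj (2 * j + 1)).symm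
  have hadjb : G.Adj (r (2 * j + 2)) b.1 := by rw [hb1]; exact (hadj (2 * j + 1)).symm
  set q1 : Σ u, M u := ⟨r (2 * j + 2), ie (r (2 * j + 2)) a.1 a.2⟩ with hq1
  set q2 : Σ u, M u := ⟨r (2 * j + 2), ie (r (2 * j + 2)) b.1 b.2⟩ with hq2
  have h1 : quotDistM M (fun _ => inferInstance) R a q1 = 0 :=
    quotDistM_cut a hv hwa hadja
  have h2 : quotDistM M (fun _ => inferInstance) R q2 b = 0 :=
    quotDistM_cut' b hv hwb hadjb
  have h3 : quotDistM M (fun _ => inferInstance) R q1 q2 ≤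
      2 ^ (G.dist v₀ (r 0)) * (1 / 2 : ℝ) ^ (j + 1) :=
    vert_bound hT hdisj hbip hv₀ hshrink ⟨hadj, hinj, hV, hW⟩ j _ _
  have L1 : IsLinkingChainM M R _ a q1 := cut_linked a hv hwa hadja
  have L2 : IsLinkingChainM M R _ q1 q2 :=
    isLinkingChainM_single (R := R) (x := q1) (y := q2) rfl
  have L3 : IsLinkingChainM M R _ q2 b := (cut_linked b hv hwb hadjb).reverse hsymm
  have L23 : IsLinkingChainM M R _ q1 b := L2.append hrefl L3
  have L123 : IsLinkingChainM M R _ a b := L1.append hrefl L23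
  refine ⟨?_, _, L123⟩
  have t1 := quotDistM_triangle (m := fun _ => inferInstance) hrefl ⟨_, L1⟩ ⟨_, L23⟩
  have t2 := quotDistM_triangle (m := fun _ => inferInstance) hrefl ⟨_, L2⟩ ⟨_, L3⟩
  linarith [t1, t2, h1, h2, h3]

end Aux


/-- For a tree system of cut pairs over `G` with compatible shrinking metrics
(total space `(M_T, d)` with the quotient metric `d = quotDistM`), every associated sequence
for an end `x ∈ ∂T` is Cauchy, and any two associated sequences `(p_n)`, `(p'_n)` for the same
end satisfy `d(p_n, p'_n) → 0`. -/
theorem stmt14 {U : Type*} [Countable U] (G : SimpleGraph U) (hT : G.IsTree)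
    (Vset Wset : Set U) (hpart : Vset ∪ Wset = Set.univ) (hdisj : Disjoint Vset Wset)
    (hbip : ∀ u v, G.Adj u v → (u ∈ Vset ∧ v ∈ Wset) ∨ (u ∈ Wset ∧ v ∈ Vset))
    (hval : ∀ w ∈ Wset, (G.neighborSet w).Finite ∧ 2 ≤ (G.neighborSet w).ncard)
    (M : U → Type*) [∀ u, MetricSpace (M u)] [∀ u, CompactSpace (M u)]
    (htwo : ∀ w ∈ Wset, ∃ x y : M w, x ≠ y ∧ ∀ z : M w, z = x ∨ z = y)
    (ie : ∀ v w : U, M w → M v)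
    (hie : ∀ v w, v ∈ Vset → w ∈ Wset → G.Adj v w → Function.Injective (ie v w))
    (hiso : ∀ v w, v ∈ Vset → w ∈ Wset → G.Adj v w → ∀ x y : M w,
      dist (ie v w x) (ie v w y) = dist x y)
    (hint : ∀ v w w', v ∈ Vset → w ∈ Wset → w' ∈ Wset → G.Adj v w → G.Adj v w' →
      w ≠ w' → (Set.range (ie v w) ∩ Set.range (ie v w')).Subsingleton)
    (hnull : ∀ v ∈ Vset, ∀ ε > (0 : ℝ),
      {w | w ∈ Wset ∧ G.Adj v w ∧ ε ≤ Metric.diam (Set.range (ie v w))}.Finite)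
    (v₀ : U) (hv₀ : v₀ ∈ Vset)
    (hshrink : ∀ v ∈ Vset, ∀ k : ℕ, G.dist v₀ v = 2 * k → ∀ x y : M v,
      quotDistM M (fun _ => inferInstance) (Relation.EqvGen (cutRel M G Vset Wset ie))
        ⟨v, x⟩ ⟨v, y⟩ ≤ (1 / 2 : ℝ) ^ k) :
    (∀ (r : ℕ → U) (p : ℕ → Σ u, M u), IsAlternatingRay G Vset Wset r →
      IsAssociatedSeq M r p →
      ∀ ε > (0 : ℝ), ∃ N : ℕ, ∀ m n : ℕ, N ≤ m → N ≤ n →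
        quotDistM M (fun _ => inferInstance)
          (Relation.EqvGen (cutRel M G Vset Wset ie)) (p m) (p n) < ε) ∧
    (∀ (r r' : ℕ → U) (p p' : ℕ → Σ u, M u),
      IsAlternatingRay G Vset Wset r → IsAlternatingRay G Vset Wset r' →
      IsAssociatedSeq M r p → IsAssociatedSeq M r' p' → SameEnd r r' →
      Filter.Tendsto (fun n => quotDistM M (fun _ => inferInstance)
          (Relation.EqvGen (cutRel M G Vset Wset ie)) (p n) (p' n))
        Filter.atTop (nhds 0)) := by
  set R := Relation.EqvGen (cutRel M G Vset Wset ie) with hR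
  have hrefl : ∀ a : Σ u, M u, R a a := fun a => Relation.EqvGen.refl a
  have hsymm : ∀ a b : Σ u, M u, R a b → R b a := fun a b h => h.symm _ _
  constructor
  · -- Part 1: Cauchy
    intro r p hr hp ε hε
    set C := G.dist v₀ (r 0) with hC
    have hCpos : (0 : ℝ) < 2 ^ C := by positivity
    obtain ⟨N, hN⟩ := exists_pow_lt_of_lt_one (x := ε / 2 ^ C) (y := (1 / 2 : ℝ))
      (by positivity) (by norm_num)
    refine ⟨N, fun m n hm hn => ?_⟩
    have key : ∀ m n : ℕ, N ≤ m → m ≤ n →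
        quotDistM M (fun _ => inferInstance) R (p m) (p n) < ε := by
      intro m n hm hmn
      obtain ⟨hb, -⟩ := cumul_bound hT hdisj hbip hv₀ hshrink hr hp m n hmn
      have h1 : (0:ℝ) ≤ (1 / 2 : ℝ) ^ n := by positivity
      have h2 : (1 / 2 : ℝ) ^ m ≤ (1 / 2 : ℝ) ^ N :=
        pow_le_pow_of_le_one (by norm_num) (by norm_num) hm
      have h3 : (1 / 2 : ℝ) ^ N < ε / 2 ^ C := hN
      have h4 : (2:ℝ) ^ C * (1 / 2 : ℝ) ^ N < ε := by
        rw [lt_div_iff₀ hCpos] at h3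
        linarith
      nlinarith
    rcases le_total m n with h | h
    · exact key m n hm h
    · rw [quotDistM_symm hsymm]
      exact key n m hn h
  · -- Part 2: same end
    intro r r' p p' hr hr' hp hp' hse
    obtain ⟨k, k', hkk⟩ := hse
    have hpar : k % 2 = k' % 2 := sameEnd_parity hdisj hr hr' hkk
    set C := G.dist v₀ (r 0) with hC
    set C' := G.dist v₀ (r' 0) with hC'
    set s := (k + k') / 2 with hs_def
    have hs : 2 * s = k + k' := by omega
    have bound : ∀ n, quotDistM M (fun _ => inferInstance) R (p n) (p' n) ≤
        ((2:ℝ) ^ C + 2 ^ C + 2 ^ C') * (1 / 2 : ℝ) ^ n := by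
      intro n
      set j := n + k with hj_def
      set j' := n + s with hj'_def
      have hw_eq : r (2 * j + 1) = r' (2 * j' + 1) := by
        have := hkk (2 * n + k + 1)
        have e1 : 2 * n + k + 1 + k = 2 * j + 1 := by omega
        have e2 : 2 * n + k + 1 + k' = 2 * j' + 1 := by omega
        rw [e1, e2] at this; exact this
      obtain ⟨d1, c1, hc1⟩ := cumul_bound hT hdisj hbip hv₀ hshrink hr hp n j
        (Nat.le_add_right n k)
      obtain ⟨d3, c3, hc3⟩ := cumul_bound hT hdisj hbip hv₀ hshrink hr' hp' n j'
        (Nat.le_add_right n s)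
      have ha1 : (p j).1 = r (2 * j + 1) := hp j
      have hb1 : (p' j').1 = r (2 * j + 1) := by rw [hw_eq]; exact hp' j'
      obtain ⟨d2, c2, hc2⟩ := bridge_bound hT hdisj hbip hv₀ hshrink hr j
        (p j) (p' j') ha1 hb1
      -- triangle
      have L3r : IsLinkingChainM M R _ (p' j') (p' n) := hc3.reverse hsymm
      have L23 : IsLinkingChainM M R _ (p j) (p' n) := hc2.append hrefl L3r
      have t1 := quotDistM_triangle (m := fun _ => inferInstance) hrefl
        ⟨_, hc1⟩ ⟨_, L23⟩
      have t2 := quotDistM_triangle (m := fun _ => inferInstance) hrefl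
        ⟨_, hc2⟩ ⟨_, L3r⟩
      have hd3' : quotDistM M (fun _ => inferInstance) R (p' j') (p' n) ≤
          (2:ℝ) ^ C' * ((1 / 2 : ℝ) ^ n - (1 / 2 : ℝ) ^ j') := by
        rw [quotDistM_symm hsymm]; exact d3
      -- numeric bounds
      have e1 : (0:ℝ) ≤ (1 / 2 : ℝ) ^ j := by positivity
      have e2 : (0:ℝ) ≤ (1 / 2 : ℝ) ^ j' := by positivity
      have e3 : ((1:ℝ) / 2) ^ (j + 1) ≤ (1 / 2 : ℝ) ^ n :=
        pow_le_pow_of_le_one (by norm_num) (by norm_num) (by omega)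
      have p1 : (0:ℝ) < 2 ^ C := by positivity
      have p2 : (0:ℝ) < 2 ^ C' := by positivity
      nlinarith [d1, d2, hd3', t1, t2]
    have hzero : Filter.Tendsto
        (fun n => ((2:ℝ) ^ C + 2 ^ C + 2 ^ C') * (1 / 2 : ℝ) ^ n)
        Filter.atTop (nhds 0) := by
      have := tendsto_pow_atTop_nhds_zero_of_lt_one
        (show (0:ℝ) ≤ 1/2 by norm_num) (show (1:ℝ)/2 < 1 by norm_num)
      simpa using this.const_mul ((2:ℝ) ^ C + 2 ^ C + 2 ^ C')
    exact squeeze_zero (fun n => quotDistM_nonneg _ _) bound hzero
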